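/- Let G be an affine flat group scheme over a Dedekind domain k. Then every O(G)-comodule (algebraic representation of G) whose underlying k-module is torsion-free is the filtered union of its subcomodules whose underlying k-modules are finitely generated and projective. -/

import Mathlib

open TensorProduct

/-- A comodule over the coalgebra `A = O(G)` of an affine (flat) group scheme `G` over `k`:
a `k`-module `V` together with a coassociative, counital coaction `V → V ⊗ A`. -/
structure GComodule (k : Type*) [CommRing k] (A : Type*) [AddCommGroup A] [Module k A]
    [Coalgebra k A] (V : Type*) [AddCommGroup V] [Module k V] where
  coaction : V →ₗ[k] V ⊗[k] A
  counit_coaction :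
    (TensorProduct.map (LinearMap.id (M := V)) (Coalgebra.counit (R := k) (A := A))) ∘ₗ coaction
      = (TensorProduct.rid k V).symm.toLinearMap
  coassoc :
    (TensorProduct.map coaction (LinearMap.id (M := A))) ∘ₗ coaction
      = (TensorProduct.assoc k V A A).symm.toLinearMap
          ∘ₗ (TensorProduct.map (LinearMap.id (M := V)) (Coalgebra.comul (R := k) (A := A)))
          ∘ₗ coaction

/-- A submodule `W ⊆ V` is a subcomodule if the coaction sends `W` into the image of
`W ⊗ A → V ⊗ A`. -/
def GComodule.IsSubcomodule {k : Type*} [CommRing k] {A : Type*} [AddCommGroup A] [Module k A]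
    [Coalgebra k A] {V : Type*} [AddCommGroup V] [Module k V] (ρ : GComodule k A V)
    (W : Submodule k V) : Prop :=
  ∀ w ∈ W, ρ.coaction w ∈ LinearMap.range (W.subtype.rTensor A)


theorem aux_fg_torsionFree_projective (k : Type*) [CommRing k] [IsDedekindDomain k]
    (M : Type*) [AddCommGroup M] [Module k M] [NoZeroSMulDivisors k M] [Module.Finite k M] :
    Module.Projective k M := by
  by_cases hk : IsField k
  · letI := hk.toField
    infer_instance
  · haveI : Module.FinitePresentation k M := Module.finitePresentation_of_finite k M
    apply Module.projective_of_localization_maximal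
    intro I hI
    have hIbot : I ≠ ⊥ := Ring.ne_bot_of_isMaximal_of_not_isField hI hk
    haveI : IsDiscreteValuationRing (Localization.AtPrime I) :=
      IsLocalization.AtPrime.isDiscreteValuationRing_of_dedekind_domain k hIbot _
    haveI : Module.Finite (Localization.AtPrime I) (LocalizedModule I.primeCompl M) :=
      Module.Finite.of_isLocalizedModule I.primeCompl (LocalizedModule.mkLinearMap I.primeCompl M)
    haveI : NoZeroSMulDivisors (Localization.AtPrime I) (LocalizedModule I.primeCompl M) := by
      refine ⟨fun {c} {x} h => ?_⟩
      induction x using LocalizedModule.induction_on with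
      | h m s =>
        induction c using Localization.induction_on with
        | H p =>
          obtain ⟨r, t⟩ := p
          rw [LocalizedModule.mk_smul_mk] at h
          have h0 : (LocalizedModule.mk (r • m) (t * s) : LocalizedModule I.primeCompl M)
              = LocalizedModule.mk 0 1 := by rw [h, LocalizedModule.zero_mk]
          rw [LocalizedModule.mk_eq] at h0
          obtain ⟨u, hu⟩ := h0
          simp only [smul_zero, one_smul] at hu
          have : ((u : k) * r) • m = 0 := by
            rw [mul_smul]; exact hu
          rcases smul_eq_zero.mp this with h1 | h2
          · rcases mul_eq_zero.mp h1 with h3 | h4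
            · exact absurd h3 (fun h3 => u.2 (h3 ▸ I.zero_mem))
            · left; rw [h4, Localization.mk_zero]
          · right; rw [h2, LocalizedModule.zero_mk]
    exact Module.Projective.of_free

theorem aux_exists_subcomodule
    (k : Type*) [CommRing k] [IsNoetherianRing k]
    (A : Type*) [AddCommGroup A] [Module k A] [Coalgebra k A] [Module.Flat k A]
    (V : Type*) [AddCommGroup V] [Module k V]
    (ρ : GComodule k A V) (v : V) :
    ∃ W : Submodule k V, ρ.IsSubcomodule W ∧ W.FG ∧ v ∈ W := by
  obtain ⟨W₀, hfin, hsub⟩ := TensorProduct.exists_finite_submodule_left_of_setFinite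
    (R := k) ({ρ.coaction v} : Set (V ⊗[k] A)) (Set.finite_singleton _)
  have hv : ρ.coaction v ∈ LinearMap.range (W₀.subtype.rTensor A) :=
    hsub rfl
  set f : V →ₗ[k] (V ⧸ W₀) ⊗[k] A := (W₀.mkQ.rTensor A) ∘ₗ ρ.coaction with hf
  -- ker f ≤ W₀ via the counit
  have hle : LinearMap.ker f ≤ W₀ := by
    intro w hw
    have h0 : (W₀.mkQ.rTensor A) (ρ.coaction w) = 0 := hw
    have hcomm : (W₀.mkQ.rTensor k) ∘ₗ
        (TensorProduct.map (LinearMap.id (M := V)) (Coalgebra.counit (R := k) (A := A)))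
        = (LinearMap.lTensor (V ⧸ W₀) (Coalgebra.counit (R := k) (A := A)))
            ∘ₗ (W₀.mkQ.rTensor A) := by
      apply TensorProduct.ext'
      intro x a
      simp
    have h1 := LinearMap.congr_fun ρ.counit_coaction w
    have h2 := LinearMap.congr_fun hcomm (ρ.coaction w)
    simp only [LinearMap.comp_apply] at h1 h2
    rw [h1, h0, map_zero] at h2
    have h2' : (W₀.mkQ w) ⊗ₜ[k] (1 : k) = 0 := by
      simpa [TensorProduct.rid_symm_apply] using h2
    have h4 : W₀.mkQ w = 0 := by
      have := congrArg (TensorProduct.rid k (V ⧸ W₀)) h2'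
      simpa using this
    rwa [← Submodule.Quotient.mk_eq_zero, ← Submodule.mkQ_apply]
  refine ⟨LinearMap.ker f, ?_, ?_, ?_⟩
  · -- subcomodule
    intro w hw
    have hw0 : (W₀.mkQ.rTensor A) (ρ.coaction w) = 0 := hw
    have e₀ : Function.Exact (W₀.subtype.rTensor A) (W₀.mkQ.rTensor A) :=
      Module.Flat.rTensor_exact A (LinearMap.exact_subtype_mkQ W₀)
    obtain ⟨y, hy⟩ := (e₀ (ρ.coaction w)).mp hw0
    have e₁ : Function.Exact ((LinearMap.ker f).subtype.rTensor A) (f.rTensor A) :=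
      Module.Flat.rTensor_exact A (LinearMap.exact_subtype_ker_map f)
    have key : (f.rTensor A) (ρ.coaction w) = 0 := by
      have hfr : f.rTensor A = ((W₀.mkQ.rTensor A).rTensor A) ∘ₗ (ρ.coaction.rTensor A) := by
        rw [hf, LinearMap.rTensor_comp]
      have hco := LinearMap.congr_fun ρ.coassoc w
      simp only [LinearMap.comp_apply, LinearEquiv.coe_coe] at hco
      have hrt : ρ.coaction.rTensor A = TensorProduct.map ρ.coaction (LinearMap.id (M := A)) := rfl
      rw [hfr, LinearMap.comp_apply, hrt, hco, ← hy]
      have Lzero : (((W₀.mkQ.rTensor A).rTensor A)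
          ∘ₗ ((TensorProduct.assoc k V A A).symm.toLinearMap)
          ∘ₗ (TensorProduct.map (LinearMap.id (M := V)) (Coalgebra.comul (R := k) (A := A)))
          ∘ₗ (W₀.subtype.rTensor A)) = 0 := by
        apply TensorProduct.ext'
        intro x a
        simp only [LinearMap.comp_apply, LinearMap.rTensor_tmul, TensorProduct.map_tmul,
          LinearMap.id_coe, id_eq, LinearMap.zero_apply, LinearEquiv.coe_coe]
        generalize (Coalgebra.comul (R := k) (A := A)) a = u
        induction u using TensorProduct.induction_on with
        | zero => simp
        | tmul a₁ a₂ =>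
          simp only [TensorProduct.assoc_symm_tmul, LinearMap.rTensor_tmul,
            Submodule.mkQ_apply]
          rw [show (Submodule.Quotient.mk (W₀.subtype x) : V ⧸ W₀) = 0 from
            (Submodule.Quotient.mk_eq_zero W₀).mpr x.2]
          simp
        | add u₁ u₂ h₁ h₂ =>
          simp only [Submodule.subtype_apply] at h₁ h₂
          simp [TensorProduct.tmul_add, h₁, h₂]
      have := LinearMap.congr_fun Lzero y
      simpa only [LinearMap.comp_apply, LinearMap.zero_apply, LinearEquiv.coe_coe] using this
    obtain ⟨z, hz⟩ := (e₁ (ρ.coaction w)).mp key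
    exact ⟨z, hz⟩
  · -- FG
    have hW₀fg : W₀.FG := Module.Finite.iff_fg.mp hfin
    haveI : Module.Finite k W₀ := hfin
    haveI : IsNoetherian k W₀ := isNoetherian_of_isNoetherianRing_of_finite k W₀
    have : LinearMap.ker f = Submodule.map W₀.subtype
        (Submodule.comap W₀.subtype (LinearMap.ker f)) := by
      rw [Submodule.map_comap_subtype]
      exact (inf_eq_right.mpr hle).symm
    rw [this]
    exact (IsNoetherian.noetherian _).map _
  · -- v ∈ ker f
    obtain ⟨y, hy⟩ := hv
    have : f v = ((W₀.mkQ ∘ₗ W₀.subtype).rTensor A) y := by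
      rw [hf, LinearMap.comp_apply, ← hy, LinearMap.rTensor_comp, LinearMap.comp_apply]
    rw [LinearMap.mem_ker, this]
    have hz : W₀.mkQ ∘ₗ W₀.subtype = 0 := by
      ext x; simp
    rw [hz]
    simp

/-- Over a Dedekind domain `k`, for `G` an affine flat group scheme with
(commutative Hopf) coordinate algebra `A = O(G)` flat over `k`, every `O(G)`-comodule whose
underlying `k`-module is torsion-free is the filtered union of its subcomodules whose
underlying `k`-modules are finitely generated and projective. -/
theorem comodule_filtered_union_of_fg_projective_subcomodules
    (k : Type*) [CommRing k] [IsDedekindDomain k]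
    (A : Type*) [CommRing A] [HopfAlgebra k A] [Module.Flat k A]
    (V : Type*) [AddCommGroup V] [Module k V] [NoZeroSMulDivisors k V]
    (ρ : GComodule k A V) :
    DirectedOn (· ≤ ·)
      {W : Submodule k V | ρ.IsSubcomodule W ∧ W.FG ∧ Module.Projective k W} ∧
    sSup {W : Submodule k V | ρ.IsSubcomodule W ∧ W.FG ∧ Module.Projective k W} = ⊤ := by
  constructor
  · rintro W₁ ⟨h₁s, h₁f, -⟩ W₂ ⟨h₂s, h₂f, -⟩
    have hsup : ρ.IsSubcomodule (W₁ ⊔ W₂) := by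
      intro w hw
      obtain ⟨w₁, hw₁, w₂, hw₂, rfl⟩ := Submodule.mem_sup.mp hw
      rw [map_add]
      have incl : ∀ (W : Submodule k V) (h : W ≤ W₁ ⊔ W₂) (x : V ⊗[k] A),
          x ∈ LinearMap.range (W.subtype.rTensor A) →
          x ∈ LinearMap.range ((W₁ ⊔ W₂).subtype.rTensor A) := by
        rintro W h x ⟨y, rfl⟩
        refine ⟨(Submodule.inclusion h).rTensor A y, ?_⟩
        rw [← LinearMap.comp_apply, ← LinearMap.rTensor_comp, Submodule.subtype_comp_inclusion]
      exact add_mem (incl W₁ le_sup_left _ (h₁s w₁ hw₁)) (incl W₂ le_sup_right _ (h₂s w₂ hw₂))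
    have hfg := h₁f.sup h₂f
    haveI : Module.Finite k ↥(W₁ ⊔ W₂) := Module.Finite.iff_fg.mpr hfg
    haveI : NoZeroSMulDivisors k ↥(W₁ ⊔ W₂) :=
      Function.Injective.noZeroSMulDivisors _ Subtype.val_injective rfl (fun _ _ => rfl)
    exact ⟨W₁ ⊔ W₂, ⟨hsup, hfg, aux_fg_torsionFree_projective k _⟩, le_sup_left, le_sup_right⟩
  · rw [eq_top_iff]
    intro v _
    obtain ⟨W, hs, hfg, hv⟩ := aux_exists_subcomodule k A V ρ v
    haveI : Module.Finite k W := Module.Finite.iff_fg.mpr hfg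
    haveI : NoZeroSMulDivisors k W :=
      Function.Injective.noZeroSMulDivisors _ Subtype.val_injective rfl (fun _ _ => rfl)
    have hmem : W ∈ {W : Submodule k V | ρ.IsSubcomodule W ∧ W.FG ∧ Module.Projective k W} :=
      ⟨hs, hfg, aux_fg_torsionFree_projective k W⟩
    exact le_sSup hmem hv
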